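/- Let d ≥ 1, let σ be a permutation of [d], and let N : [d] → 𝒫([d]) be a function with j ∈ N(σ(j)) for every j ∈ [d]. Let 𝒮 be a family of subsets of [d] satisfying the coverage condition: for every j ∈ [d], ⋃_{S ∈ 𝒮 : j ∉ S} S = [d] \ {j}. Suppose that for every S ∈ 𝒮 and every j ∈ [d], if j ∉ S then N(σ(j)) ∩ S = ∅. Then N(σ(j)) = {j} for every j ∈ [d]. -/
import Mathlib

/-- Let `σ` be a permutation of `[d]` and `N : [d] → 𝒫([d])` with
`j ∈ N (σ j)` for all `j`. Let `𝒮` be a family of subsets of `[d]` satisfying the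
coverage condition `⋃ {S ∈ 𝒮 | j ∉ S} = [d] \ {j}` for each `j`. If for every `S ∈ 𝒮`
and every `j ∉ S` we have `N (σ j) ∩ S = ∅`, then `N (σ j) = {j}` for every `j`. -/
theorem support_singleton_of_coverage
    {d : ℕ} (hd : 1 ≤ d) (σ : Equiv.Perm (Fin d)) (N : Fin d → Set (Fin d))
    (hN : ∀ j : Fin d, j ∈ N (σ j)) (𝒮 : Set (Set (Fin d)))
    (hcov : ∀ j : Fin d, (⋃ S ∈ {S | S ∈ 𝒮 ∧ j ∉ S}, S) = Set.univ \ {j})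
    (hdisj : ∀ S ∈ 𝒮, ∀ j : Fin d, j ∉ S → N (σ j) ∩ S = ∅) :
    ∀ j : Fin d, N (σ j) = {j} := by
  intro j
  apply Set.eq_singleton_iff_unique_mem.mpr
  refine ⟨hN j, fun k hk => ?_⟩
  by_contra hkj
  have hmem : k ∈ Set.univ \ ({j} : Set (Fin d)) := ⟨trivial, hkj⟩
  rw [← hcov j] at hmem
  obtain ⟨S, hS, hkS⟩ := Set.mem_iUnion₂.mp hmem
  have := hdisj S hS.1 j hS.2
  exact absurd (Set.mem_inter hk hkS) (this ▸ id)
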